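/- Let H be a complex Hilbert space and let v₁, …, vₙ be bounded linear operators on H such that vᵢ vᵢ* vᵢ = vᵢ for every i (each vᵢ is a partial isometry) and vᵢ vᵢ* = v_{i−1}* v_{i−1} for every i = 2, …, n. Let v = v₁ v₂ ⋯ vₙ. Then for every ξ ∈ H, ‖(v v* − v) ξ‖ ≤ Σ_{i=1}^{n} ‖(vᵢ vᵢ* − vᵢ) ξ‖. -/

import Mathlib

open ContinuousLinearMap

private lemma pi_norm_le_one {H : Type*} [NormedAddCommGroup H] [InnerProductSpace ℂ H]
    [CompleteSpace H] (a : H →L[ℂ] H) (h : a * adjoint a * a = a) : ‖a‖ ≤ 1 := by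
  set p : H →L[ℂ] H := adjoint a * a with hp
  have hpp : p * p = p := by
    rw [hp, mul_assoc, ← mul_assoc a (adjoint a) a, h]
  have hstar : star p = p := by
    rw [hp, ← star_eq_adjoint, star_mul, star_star, star_eq_adjoint]
  have hnp : ‖p‖ * ‖p‖ = ‖p‖ := by
    calc ‖p‖ * ‖p‖ = ‖star p * p‖ := (CStarRing.norm_star_mul_self).symm
    _ = ‖p‖ := by rw [hstar, hpp]
  have hple : ‖p‖ ≤ 1 := by nlinarith [norm_nonneg p]
  have hna : ‖a‖ * ‖a‖ = ‖p‖ := by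
    rw [hp, ← star_eq_adjoint, CStarRing.norm_star_mul_self]
  nlinarith [norm_nonneg a]

private lemma key_bound {H : Type*} [NormedAddCommGroup H] [InnerProductSpace ℂ H]
    [CompleteSpace H] (L : List (H →L[ℂ] H)) :
    ∀ (a : H →L[ℂ] H),
    (∀ b ∈ a :: L, b * adjoint b * b = b) →
    List.Chain' (fun x y => y * adjoint y = adjoint x * x) (a :: L) →
    ∀ ξ : H,
    ‖(a * adjoint a - (a :: L).prod) ξ‖ ≤
      ((a :: L).map (fun b => ‖(b * adjoint b - b) ξ‖)).sum := by
  induction L with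
  | nil => intro a _ _ ξ; simp
  | cons b L ih =>
      intro a hpi hch ξ
      have hab : b * adjoint b = adjoint a * a := (List.isChain_cons_cons.mp hch).1
      have ha : a * adjoint a * a = a := hpi a (by simp)
      have hsplit : a * adjoint a - (a :: b :: L).prod =
          (a * adjoint a - a) + a * (b * adjoint b - (b :: L).prod) := by
        rw [List.prod_cons, mul_sub, hab, ← mul_assoc, ha]
        abel
      have hIH := ih b (fun c hc => hpi c (by simp at hc ⊢; tauto))
        (List.isChain_cons_cons.mp hch).2 ξ
      have hna : ‖a‖ ≤ 1 := pi_norm_le_one a ha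
      calc ‖(a * adjoint a - (a :: b :: L).prod) ξ‖
          = ‖((a * adjoint a - a) + a * (b * adjoint b - (b :: L).prod)) ξ‖ := by
            rw [hsplit]
        _ ≤ ‖(a * adjoint a - a) ξ‖ + ‖(a * (b * adjoint b - (b :: L).prod)) ξ‖ := by
            rw [ContinuousLinearMap.add_apply]; exact norm_add_le _ _
        _ ≤ ‖(a * adjoint a - a) ξ‖ + ‖(b * adjoint b - (b :: L).prod) ξ‖ := by
            gcongr
            rw [ContinuousLinearMap.mul_apply]
            calc ‖a ((b * adjoint b - (b :: L).prod) ξ)‖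
                ≤ ‖a‖ * ‖(b * adjoint b - (b :: L).prod) ξ‖ := a.le_opNorm _
              _ ≤ 1 * ‖(b * adjoint b - (b :: L).prod) ξ‖ := by gcongr
              _ = _ := one_mul _
        _ ≤ ‖(a * adjoint a - a) ξ‖ +
              ((b :: L).map (fun c => ‖(c * adjoint c - c) ξ‖)).sum := by gcongr
        _ = _ := by simp

private lemma prod_adj {H : Type*} [NormedAddCommGroup H] [InnerProductSpace ℂ H]
    [CompleteSpace H] (L : List (H →L[ℂ] H)) :
    ∀ (a : H →L[ℂ] H),
    (∀ b ∈ a :: L, b * adjoint b * b = b) →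
    List.Chain' (fun x y => y * adjoint y = adjoint x * x) (a :: L) →
    (a :: L).prod * adjoint (a :: L).prod = a * adjoint a := by
  induction L with
  | nil => intro a _ _; simp
  | cons b L ih =>
      intro a hpi hch
      have hab : b * adjoint b = adjoint a * a := (List.isChain_cons_cons.mp hch).1
      have ha : a * adjoint a * a = a := hpi a (by simp)
      have hIH := ih b (fun c hc => hpi c (by simp at hc ⊢; tauto))
        (List.isChain_cons_cons.mp hch).2
      rw [List.prod_cons, ← star_eq_adjoint, star_mul, star_eq_adjoint, star_eq_adjoint]
      calc a * (b :: L).prod * (adjoint ((b :: L).prod) * adjoint a)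
          = a * ((b :: L).prod * adjoint ((b :: L).prod)) * adjoint a := by
            rw [mul_assoc, mul_assoc, mul_assoc]
        _ = a * (b * adjoint b) * adjoint a := by rw [hIH]
        _ = a * (adjoint a * a) * adjoint a := by rw [hab]
        _ = a * adjoint a := by rw [← mul_assoc a (adjoint a) a, ha]

theorem stmt_14 {H : Type*} [NormedAddCommGroup H] [InnerProductSpace ℂ H]
    [CompleteSpace H] (n : ℕ) (v : Fin n → (H →L[ℂ] H))
    (hpi : ∀ i, v i * adjoint (v i) * v i = v i)
    (hchain : ∀ i j : Fin n, (j : ℕ) = (i : ℕ) + 1 →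
      v j * adjoint (v j) = adjoint (v i) * v i)
    (ξ : H) :
    ‖((List.ofFn v).prod * adjoint (List.ofFn v).prod - (List.ofFn v).prod) ξ‖ ≤
      ∑ i : Fin n, ‖(v i * adjoint (v i) - v i) ξ‖ := by
  cases n with
  | zero =>
      simp [List.ofFn_zero, ← star_eq_adjoint]
  | succ m =>
      have hofn : List.ofFn v = v 0 :: List.ofFn (fun i : Fin m => v i.succ) :=
        List.ofFn_succ
      have hmem : ∀ b ∈ List.ofFn v, b * adjoint b * b = b := by
        intro b hb
        obtain ⟨i, rfl⟩ := List.mem_ofFn.mp hb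
        exact hpi i
      have hch : List.Chain' (fun x y => y * adjoint y = adjoint x * x) (List.ofFn v) := by
        rw [List.Chain', List.isChain_iff_getElem]
        intro i hi
        simp only [List.get_eq_getElem, List.getElem_ofFn]
        apply hchain
        simp
      rw [hofn] at hmem hch
      have h1 := prod_adj _ _ hmem hch
      have h2 := key_bound _ _ hmem hch ξ
      rw [hofn, h1]
      refine h2.trans_eq ?_
      rw [← hofn, List.map_ofFn, List.sum_ofFn]
      rfl
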